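/- arXiv:2412.14728 — 9 statements merged into one kernel-verified Lean document; each statement's English description precedes it below -/
import Mathlib

section
/- Let N = (2^P, S, δ, s₀, F) be an NFA and V = {U₁, …, Uₙ} ⊆ P, and let N_{∃U₁,…,Uₙ} be its existential abstraction. Then for every finite trace t over 2^P: t is accepted by the complement of the determinization D(N_{∃U₁,…,Uₙ}) if and only if for every trace t' with t' ~_{-V} t, t' ∉ L(N). -/
/-! ## Automata -/

/-- A deterministic finite automaton (DFA) over alphabet `α` with states `S`:
a designated initial state, a total transition function, and a set of accepting states. -/
structure DFA' (α : Type*) (S : Type*) where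
  start : S
  step : S → α → S
  accept : Set S

namespace DFA'

variable {α S : Type*}

/-- The state reached from `s` after reading the word `w`. -/
def evalFrom (M : DFA' α S) (s : S) (w : List α) : S :=
  w.foldl M.step s

/-- A DFA accepts a finite word iff its unique run from the initial state ends in an
accepting state. -/
def Accepts (M : DFA' α S) (w : List α) : Prop :=
  M.evalFrom M.start w ∈ M.accept

/-- The complement of a DFA, obtained by complementing its set of accepting states. -/
def compl (M : DFA' α S) : DFA' α S :=
  { M with accept := M.acceptᶜ }

/-- The synchronous product of two DFAs over the same alphabet. -/
def prod {S₁ S₂ : Type*} (M₁ : DFA' α S₁) (M₂ : DFA' α S₂) : DFA' α (S₁ × S₂) where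
  start := (M₁.start, M₂.start)
  step := fun p a => (M₁.step p.1 a, M₂.step p.2 a)
  accept := {p | p.1 ∈ M₁.accept ∧ p.2 ∈ M₂.accept}

end DFA'

/-- A nondeterministic finite automaton (NFA) over alphabet `α` with states `S`:
a designated initial state, a transition function into sets of states, and a set of
accepting states. -/
structure NFA' (α : Type*) (S : Type*) where
  start : S
  step : S → α → Set S
  accept : Set S

namespace NFA'

variable {α S : Type*}

/-- One step of the subset construction. -/
def stepSet (M : NFA' α S) (T : Set S) (a : α) : Set S :=
  ⋃ s ∈ T, M.step s a

/-- The set of states reachable from a state in `T` after reading the word `w`. -/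
def evalFrom (M : NFA' α S) (T : Set S) (w : List α) : Set S :=
  w.foldl M.stepSet T

/-- An NFA accepts a finite word iff some run from the initial state on that word
ends in an accepting state. -/
def Accepts (M : NFA' α S) (w : List α) : Prop :=
  ∃ s ∈ M.evalFrom {M.start} w, s ∈ M.accept

/-- The determinization `D(M)` of an NFA `M` by the subset construction. -/
def det (M : NFA' α S) : DFA' α (Set S) where
  start := {M.start}
  step := M.stepSet
  accept := {T | ∃ s ∈ T, s ∈ M.accept}

end NFA'

/-- A DFA viewed as an NFA. -/
def DFA'.toNFA' {α S : Type*} (M : DFA' α S) : NFA' α S where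
  start := M.start
  step := fun s a => {M.step s a}
  accept := M.accept

/-! ## Traces -/

/-- Two finite traces over `2^P` are equivalent up to the variables in `V`
(written `t' ~_{-V} t` in the paper): they have the same length and at every position
they contain exactly the same variables of `P \ V`. -/
def EquivUpTo {P : Type*} (V : Set P) (t t' : List (Set P)) : Prop :=
  List.Forall₂ (fun a b => a \ V = b \ V) t t'

/-- The existentially abstracted NFA `N_{∃V}`: same states, initial and accepting states,
and `δ'(s, a) = { s' | ∃ a' with a ~_{-V} a' and s' ∈ δ(s, a') }`. -/
def NFA'.abstract {P S : Type*} (M : NFA' (Set P) S) (V : Set P) : NFA' (Set P) S :=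
  { M with step := fun s a => {s' | ∃ a' : Set P, a \ V = a' \ V ∧ s' ∈ M.step s a'} }

/-- The belief-state DFA `G^rel_A` of a DFA `A` over `2^{X ∪ Y}` with unreliable input
variables `Xunr ⊆ X`: states are sets of states of `A`, the initial state is `{s₀}`,
`∂(B, a) = { s' | ∃ s ∈ B, ∃ a' with a ~_{-Xunr} a' and δ(s, a') = s' }`, and a belief
state `B` is accepting iff `B ⊆ F`. -/
def DFA'.belief {X Y S : Type*} (A : DFA' (Set (X ⊕ Y)) S) (Xunr : Set X) :
    DFA' (Set (X ⊕ Y)) (Set S) where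
  start := {A.start}
  step := fun B a => {s' | ∃ s ∈ B, ∃ a' : Set (X ⊕ Y),
    a \ (Sum.inl '' Xunr) = a' \ (Sum.inl '' Xunr) ∧ A.step s a' = s'}
  accept := {B | B ⊆ A.accept}

/-! ## LTLf and QLTLf -/

/-- LTLf formulas over propositional variables `P`. -/
inductive LTLf (P : Type*) where
  | atom : P → LTLf P
  | not : LTLf P → LTLf P
  | and : LTLf P → LTLf P → LTLf P
  | next : LTLf P → LTLf P
  | until_ : LTLf P → LTLf P → LTLf P

/-- Satisfaction `t, i ⊨ φ` of an LTLf formula at position `i` (0-indexed) of a finite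
trace `t`. -/
def LTLf.Sat {P : Type*} (t : List (Set P)) : LTLf P → ℕ → Prop
  | .atom a, i => ∃ h : i < t.length, a ∈ t.get ⟨i, h⟩
  | .not φ, i => ¬ LTLf.Sat t φ i
  | .and φ ψ, i => LTLf.Sat t φ i ∧ LTLf.Sat t ψ i
  | .next φ, i => i + 1 < t.length ∧ LTLf.Sat t φ (i + 1)
  | .until_ φ ψ, i => ∃ j, i ≤ j ∧ j < t.length ∧ LTLf.Sat t ψ j ∧
      ∀ k, i ≤ k → k < j → LTLf.Sat t φ k

/-- QLTLf formulas over propositional variables `P`: LTLf extended with second-order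
existential quantification over propositional variables. -/
inductive QLTLf (P : Type*) where
  | atom : P → QLTLf P
  | not : QLTLf P → QLTLf P
  | and : QLTLf P → QLTLf P → QLTLf P
  | next : QLTLf P → QLTLf P
  | until_ : QLTLf P → QLTLf P → QLTLf P
  | ex : P → QLTLf P → QLTLf P

/-- Satisfaction `t, i ⊨ φ` of a QLTLf formula at position `i` (0-indexed) of a finite
trace `t`; `t, i ⊨ ∃X. φ` iff there is a trace `t'` with `t' ~_{-{X}} t` and `t', i ⊨ φ`. -/
def QLTLf.Sat {P : Type*} : List (Set P) → QLTLf P → ℕ → Prop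
  | t, .atom a, i => ∃ h : i < t.length, a ∈ t.get ⟨i, h⟩
  | t, .not φ, i => ¬ QLTLf.Sat t φ i
  | t, .and φ ψ, i => QLTLf.Sat t φ i ∧ QLTLf.Sat t ψ i
  | t, .next φ, i => i + 1 < t.length ∧ QLTLf.Sat t φ (i + 1)
  | t, .until_ φ ψ, i => ∃ j, i ≤ j ∧ j < t.length ∧ QLTLf.Sat t ψ j ∧
      ∀ k, i ≤ k → k < j → QLTLf.Sat t φ k
  | t, .ex p φ, i => ∃ t', EquivUpTo {p} t' t ∧ QLTLf.Sat t' φ i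

/-- Universal second-order quantification `∀X. φ := ¬∃X. ¬φ`. -/
def QLTLf.all {P : Type*} (p : P) (φ : QLTLf P) : QLTLf P :=
  .not (.ex p (.not φ))

/-- The embedding of (quantifier-free) LTLf formulas into QLTLf. -/
def LTLf.toQ {P : Type*} : LTLf P → QLTLf P
  | .atom a => .atom a
  | .not φ => .not φ.toQ
  | .and φ ψ => .and φ.toQ ψ.toQ
  | .next φ => .next φ.toQ
  | .until_ φ ψ => .until_ φ.toQ ψ.toQ

/-! ## Strategies, plays and synthesis -/

section Synthesis

variable {X Y : Type*}

/-- The letter `X ∪ Y ∈ 2^{X ∪ Y}` combining an input letter `A ∈ 2^X` and an output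
letter `B ∈ 2^Y`. -/
def combine (A : Set X) (B : Set Y) : Set (X ⊕ Y) :=
  Sum.inl '' A ∪ Sum.inr '' B

/-- The finite trace `((X₀ ∪ Y₀), …, (X_k ∪ Y_k))` with `Y_i = σ(X₀, …, X_{i-1})`
produced by the strategy `σ` against the infinite input sequence `env`. -/
def playTrace (σ : List (Set X) → Set Y) (env : ℕ → Set X) (k : ℕ) :
    List (Set (X ⊕ Y)) :=
  (List.range (k + 1)).map fun i => combine (env i) (σ ((List.range i).map env))

/-- The strategy `σ` is winning for the agent in the DFA game on `G`: for every infinite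
input sequence there is a `k` such that the run of `G` on the induced finite trace ends
in an accepting state. -/
def Winning {S : Type*} (G : DFA' (Set (X ⊕ Y)) S) (σ : List (Set X) → Set Y) : Prop :=
  ∀ env : ℕ → Set X, ∃ k : ℕ, G.Accepts (playTrace σ env k)

/-- The strategy `σ` realizes the LTLf formula `φ` in standard LTLf synthesis. -/
def Realizes (σ : List (Set X) → Set Y) (φ : LTLf (X ⊕ Y)) : Prop :=
  ∀ env : ℕ → Set X, ∃ k : ℕ, LTLf.Sat (playTrace σ env k) φ 0

/-- The strategy `σ` realizes QLTLf synthesis for the QLTLf formula `ψ`. -/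
def RealizesQ (σ : List (Set X) → Set Y) (ψ : QLTLf (X ⊕ Y)) : Prop :=
  ∀ env : ℕ → Set X, ∃ k : ℕ, QLTLf.Sat (playTrace σ env k) ψ 0

/-- The strategy `σ` solves LTLf synthesis under unreliable input for main specification
`φm`, backup specification `φb`, and unreliable input variables `Xunr`: for every
infinite input sequence there is a `k` such that the induced finite trace `t` satisfies
`φm` and every trace `t'` with `t' ~_{-Xunr} t` satisfies `φb`. -/
def SolvesUnreliable (σ : List (Set X) → Set Y) (φm φb : LTLf (X ⊕ Y))
    (Xunr : Set X) : Prop :=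
  ∀ env : ℕ → Set X, ∃ k : ℕ,
    LTLf.Sat (playTrace σ env k) φm 0 ∧
    ∀ t', EquivUpTo (Sum.inl '' Xunr) t' (playTrace σ env k) → LTLf.Sat t' φb 0

end Synthesis

lemma NFA'.stepSet_iUnion {α S : Type*} {ι : Sort*} (N : NFA' α S) (T : ι → Set S) (a : α) :
    N.stepSet (⋃ i, T i) a = ⋃ i, N.stepSet (T i) a := by
  ext x
  simp only [NFA'.stepSet, Set.mem_iUnion]
  tauto

lemma NFA'.evalFrom_iUnion {α S : Type*} {ι : Sort*} (N : NFA' α S) (T : ι → Set S)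
    (w : List α) : N.evalFrom (⋃ i, T i) w = ⋃ i, N.evalFrom (T i) w := by
  induction w generalizing T with
  | nil => rfl
  | cons a w ih =>
    show N.evalFrom (N.stepSet (⋃ i, T i) a) w = _
    rw [N.stepSet_iUnion, ih]
    rfl

lemma NFA'.stepSet_mono {α S : Type*} (N : NFA' α S) {T T' : Set S} (h : T ⊆ T') (a : α) :
    N.stepSet T a ⊆ N.stepSet T' a := by
  intro s hs
  simp only [NFA'.stepSet, Set.mem_iUnion] at *
  obtain ⟨x, hx, h2⟩ := hs
  exact ⟨x, h hx, h2⟩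

lemma NFA'.evalFrom_mono {α S : Type*} (N : NFA' α S) {T T' : Set S} (h : T ⊆ T')
    (w : List α) : N.evalFrom T w ⊆ N.evalFrom T' w := by
  induction w generalizing T T' with
  | nil => exact h
  | cons a w ih => exact ih (N.stepSet_mono h a)

lemma NFA'.mem_abstract_evalFrom {P S : Type*} (N : NFA' (Set P) S) (V : Set P)
    (T : Set S) (w : List (Set P)) (s : S) :
    s ∈ (N.abstract V).evalFrom T w ↔
      ∃ w', List.Forall₂ (fun a b => a \ V = b \ V) w w' ∧ s ∈ N.evalFrom T w' := by
  induction w generalizing T with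
  | nil =>
    constructor
    · intro h; exact ⟨[], List.Forall₂.nil, h⟩
    · rintro ⟨w', hw, h⟩; cases hw; exact h
  | cons a w ih =>
    have hstep : (N.abstract V).stepSet T a
        = ⋃ a' : {a' : Set P // a \ V = a' \ V}, N.stepSet T a'.1 := by
      ext s'
      simp only [NFA'.stepSet, NFA'.abstract, Set.mem_iUnion, Set.mem_setOf_eq]
      constructor
      · rintro ⟨x, hx, a', ha', hs'⟩; exact ⟨⟨a', ha'⟩, x, hx, hs'⟩
      · rintro ⟨⟨a', ha'⟩, x, hx, hs'⟩; exact ⟨x, hx, a', ha', hs'⟩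
    constructor
    · intro h
      have h' : s ∈ (N.abstract V).evalFrom ((N.abstract V).stepSet T a) w := h
      rw [ih] at h'
      obtain ⟨w', hw, hs⟩ := h'
      rw [hstep, NFA'.evalFrom_iUnion] at hs
      obtain ⟨a', ha'⟩ := Set.mem_iUnion.mp hs
      exact ⟨a'.1 :: w', List.Forall₂.cons a'.2 hw, ha'⟩
    · rintro ⟨w', hw, hs⟩
      cases hw with
      | cons ha hw =>
        rename_i b l
        show s ∈ (N.abstract V).evalFrom ((N.abstract V).stepSet T a) w
        rw [ih]
        refine ⟨l, hw, ?_⟩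
        refine N.evalFrom_mono ?_ l hs
        rw [hstep]
        exact Set.subset_iUnion (fun a' : {a' : Set P // a \ V = a' \ V} =>
          N.stepSet T a'.1) ⟨b, ha⟩

/-- For an NFA `N` over `2^P` and `V = {U₁, …, Uₙ} ⊆ P`, and every finite
trace `t`: `t` is accepted by the complement of the determinization `D(N_{∃U₁,…,Uₙ})`
iff every trace `t'` with `t' ~_{-V} t` satisfies `t' ∉ L(N)`. -/
theorem compl_det_abstract_accepts_iff {P S : Type*}
    (N : NFA' (Set P) S) (V : Finset P) (t : List (Set P)) (ht : t ≠ []) :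
    ((N.abstract ↑V).det.compl).Accepts t ↔
      ∀ t', EquivUpTo (↑V) t' t → ¬ N.Accepts t' := by
  have key : ∀ s : S, s ∈ (N.abstract ↑V).evalFrom {N.start} t ↔
      ∃ w', List.Forall₂ (fun a b => a \ (↑V : Set P) = b \ ↑V) t w' ∧
        s ∈ N.evalFrom {N.start} w' :=
    fun s => N.mem_abstract_evalFrom ↑V {N.start} t s
  constructor
  · intro h t' ht' hacc
    obtain ⟨s, hs, hsa⟩ := hacc
    apply h
    refine ⟨s, ?_, hsa⟩
    show s ∈ (N.abstract ↑V).evalFrom {N.start} t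
    rw [key]
    exact ⟨t', ht'.flip.imp (fun _ _ h => h.symm), hs⟩
  · intro h hacc
    obtain ⟨s, hs, hsa⟩ := hacc
    have hs' : s ∈ (N.abstract ↑V).evalFrom {N.start} t := hs
    rw [key] at hs'
    obtain ⟨w', hw, hs⟩ := hs'
    exact h w' (hw.flip.imp (fun _ _ h => h.symm)) ⟨s, hs, hsa⟩
end

section
/- Let A = (2^{X∪Y}, S, s₀, δ, F) be a DFA with input variables partitioned as X = X_rel ⊎ X_unr, and let G^rel_A be its belief-state DFA. Then for any two finite traces t, t' over 2^{X∪Y} with t' ~_{-X_unr} t: t ∈ L(G^rel_A) if and only if t' ∈ L(G^rel_A). -/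
/-- For a DFA `A` over `2^{X∪Y}` with unreliable input variables `Xunr`
and any two finite traces `t, t'` with `t' ~_{-Xunr} t`: `t ∈ L(G^rel_A)` iff
`t' ∈ L(G^rel_A)`. -/
theorem belief_accepts_invariant {X Y S : Type*}
    (A : DFA' (Set (X ⊕ Y)) S) (Xunr : Set X)
    (t t' : List (Set (X ⊕ Y))) (ht : t ≠ [])
    (h : EquivUpTo (Sum.inl '' Xunr) t' t) :
    (A.belief Xunr).Accepts t ↔ (A.belief Xunr).Accepts t' := by
  have step_inv : ∀ (B : Set S) (a b : Set (X ⊕ Y)),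
      a \ (Sum.inl '' Xunr) = b \ (Sum.inl '' Xunr) →
      (A.belief Xunr).step B a = (A.belief Xunr).step B b := by
    intro B a b hab
    ext s'
    simp only [DFA'.belief, Set.mem_setOf_eq]
    constructor <;> rintro ⟨s, hs, a', ha', rfl⟩
    · exact ⟨s, hs, a', hab ▸ ha', rfl⟩
    · exact ⟨s, hs, a', hab.trans ha', rfl⟩
  have eval_eq : ∀ (u v : List (Set (X ⊕ Y))) (B : Set S),
      EquivUpTo (Sum.inl '' Xunr) u v →
      (A.belief Xunr).evalFrom B u = (A.belief Xunr).evalFrom B v := by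
    intro u v B huv
    induction huv generalizing B with
    | nil => rfl
    | cons hab _ ih =>
        simp only [DFA'.evalFrom, List.foldl_cons]
        rw [step_inv B _ _ hab]
        exact ih _
  unfold DFA'.Accepts
  rw [eval_eq t' t _ h]
end

section
/- Let A = (2^{X∪Y}, S, s₀, δ, F) be a DFA with input variables partitioned as X = X_rel ⊎ X_unr, and let G^rel_A be its belief-state DFA. If a finite trace t induces the run (B₀ = {s₀}, B₁, …, B_{k+1}) in G^rel_A, then for every state s ∈ B_{k+1} there exists a trace t' with t' ~_{-X_unr} t such that the run of A on t' from s₀ ends in s. -/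
/-- For a DFA `A` over `2^{X∪Y}` with unreliable input variables `Xunr`:
if a finite trace `t` induces a run of the belief-state DFA `G^rel_A` ending in the
belief state `B`, then for every `s ∈ B` there is a trace `t'` with `t' ~_{-Xunr} t`
such that the run of `A` on `t'` from the initial state ends in `s`. -/
theorem belief_state_members_reachable {X Y S : Type*}
    (A : DFA' (Set (X ⊕ Y)) S) (Xunr : Set X)
    (t : List (Set (X ⊕ Y))) (ht : t ≠ []) (s : S)
    (hs : s ∈ (A.belief Xunr).evalFrom (A.belief Xunr).start t) :
    ∃ t', EquivUpTo (Sum.inl '' Xunr) t' t ∧ A.evalFrom A.start t' = s := by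
  suffices h : ∀ (t : List (Set (X ⊕ Y))) (B : Set S) (s : S),
      s ∈ (A.belief Xunr).evalFrom B t →
      ∃ s₀ ∈ B, ∃ t', EquivUpTo (Sum.inl '' Xunr) t' t ∧ A.evalFrom s₀ t' = s by
    obtain ⟨s₀, hs₀, t', ht', he⟩ := h t (A.belief Xunr).start s hs
    simp only [DFA'.belief, Set.mem_singleton_iff] at hs₀
    exact ⟨t', ht', hs₀ ▸ he⟩
  clear hs ht t s
  intro t
  induction t with
  | nil =>
    intro B s hs
    exact ⟨s, hs, [], List.Forall₂.nil, rfl⟩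
  | cons a t ih =>
    intro B s hs
    obtain ⟨s₁, ⟨s₀, hs₀, a', ha', hstep⟩, t', ht', he⟩ :=
      ih ((A.belief Xunr).step B a) s hs
    exact ⟨s₀, hs₀, a' :: t', List.Forall₂.cons ha'.symm ht', by
      simpa [DFA'.evalFrom, hstep] using he⟩
end

section
/- Let A = (2^{X∪Y}, S, s₀, δ, F) be a DFA with input variables partitioned as X = X_rel ⊎ X_unr, and let G^rel_A be its belief-state DFA. Then for every finite trace t: if t ∈ L(G^rel_A) then t ∈ L(A). -/
lemma belief_mem_eval {X Y S : Type*}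
    (A : DFA' (Set (X ⊕ Y)) S) (Xunr : Set X) :
    ∀ (t : List (Set (X ⊕ Y))) (B : Set S) (s : S), s ∈ B →
      A.evalFrom s t ∈ (A.belief Xunr).evalFrom B t := by
  intro t
  induction t with
  | nil => intro B s hs; exact hs
  | cons a t ih =>
    intro B s hs
    exact ih _ _ ⟨s, hs, a, rfl, rfl⟩

/-- For a DFA `A` over `2^{X∪Y}` with unreliable input variables `Xunr`
and every finite trace `t`: if `t ∈ L(G^rel_A)` then `t ∈ L(A)`. -/
theorem belief_accepts_implies_accepts {X Y S : Type*}
    (A : DFA' (Set (X ⊕ Y)) S) (Xunr : Set X)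
    (t : List (Set (X ⊕ Y))) (ht : t ≠ [])
    (h : (A.belief Xunr).Accepts t) :
    A.Accepts t := by
  exact h (belief_mem_eval A Xunr t {A.start} A.start rfl)
end

section
/- Let φ_b be an LTLf formula over X ∪ Y with X = X_rel ⊎ X_unr, and let A be a DFA over 2^{X∪Y} with L(A) = { t | t ⊨ φ_b }. Then for every finite trace t: t ∈ L(G^rel_A) if and only if every trace t' with t' ~_{-X_unr} t satisfies t' ⊨ φ_b. -/
lemma belief_evalFrom {X Y S : Type*} (A : DFA' (Set (X ⊕ Y)) S) (Xunr : Set X) :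
    ∀ (t : List (Set (X ⊕ Y))) (B : Set S),
      (A.belief Xunr).evalFrom B t =
        {s' | ∃ s ∈ B, ∃ t', EquivUpTo (Sum.inl '' Xunr) t' t ∧ A.evalFrom s t' = s'} := by
  intro t
  induction t with
  | nil =>
    intro B
    ext s'
    simp only [DFA'.evalFrom, List.foldl_nil, Set.mem_setOf_eq]
    constructor
    · intro h
      exact ⟨s', h, [], List.Forall₂.nil, rfl⟩
    · rintro ⟨s, hs, t', ht', rfl⟩
      cases ht'
      exact hs
  | cons a t ih =>
    intro B
    ext s'
    simp only [DFA'.evalFrom, List.foldl_cons] at *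
    show s' ∈ List.foldl (A.belief Xunr).step ((A.belief Xunr).step B a) t ↔ _
    rw [ih]
    simp only [Set.mem_setOf_eq]
    constructor
    · rintro ⟨s₁, hs₁, t', ht', rfl⟩
      obtain ⟨s, hs, a', ha', rfl⟩ := hs₁
      exact ⟨s, hs, a' :: t', List.Forall₂.cons ha'.symm ht', rfl⟩
    · rintro ⟨s, hs, t'', ht'', rfl⟩
      cases ht'' with
      | cons ha ht' =>
        rename_i a' t'
        exact ⟨A.step s a', ⟨s, hs, a', ha.symm, rfl⟩, t', ht', rfl⟩

lemma equivUpTo_length {P : Type*} {V : Set P} {t t' : List (Set P)}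
    (h : EquivUpTo V t t') : t.length = t'.length :=
  List.Forall₂.length_eq h

/-- Let `φb` be an LTLf formula over `X ∪ Y` with unreliable input
variables `Xunr ⊆ X`, and let `A` be a DFA over `2^{X∪Y}` with `L(A) = { t | t ⊨ φb }`.
Then for every finite trace `t`: `t ∈ L(G^rel_A)` iff every trace `t'` with
`t' ~_{-Xunr} t` satisfies `t' ⊨ φb`. -/
theorem belief_accepts_iff_backup {X Y S : Type*}
    (φb : LTLf (X ⊕ Y)) (Xunr : Set X)
    (A : DFA' (Set (X ⊕ Y)) S)
    (hA : ∀ t : List (Set (X ⊕ Y)), t ≠ [] → (A.Accepts t ↔ LTLf.Sat t φb 0))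
    (t : List (Set (X ⊕ Y))) (ht : t ≠ []) :
    (A.belief Xunr).Accepts t ↔
      ∀ t', EquivUpTo (Sum.inl '' Xunr) t' t → LTLf.Sat t' φb 0 := by
  have key := belief_evalFrom A Xunr t {A.start}
  unfold DFA'.Accepts
  rw [show (A.belief Xunr).start = ({A.start} : Set S) from rfl, key]
  constructor
  · intro h t' ht'
    have ht'ne : t' ≠ [] := by
      intro hnil
      apply ht
      have := equivUpTo_length ht'
      rw [hnil] at this
      exact List.length_eq_zero_iff.mp this.symm
    have : A.evalFrom A.start t' ∈ A.accept := by
      apply h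
      exact ⟨A.start, rfl, t', ht', rfl⟩
    exact (hA t' ht'ne).mp this
  · intro h s' hs'
    obtain ⟨s, hs, t', ht', rfl⟩ := hs'
    rw [Set.mem_singleton_iff] at hs
    subst hs
    have ht'ne : t' ≠ [] := by
      intro hnil
      apply ht
      have := equivUpTo_length ht'
      rw [hnil] at this
      exact List.length_eq_zero_iff.mp this.symm
    exact (hA t' ht'ne).mpr (h t' ht')
end

section
/- Let φ_m and φ_b be LTLf formulas over X ⊎ Y with X = X_rel ⊎ X_unr and X_unr = {U₁, …, Uₙ}. Let A_{φ_m} be a DFA over 2^{X∪Y} with L(A_{φ_m}) = { t | t ⊨ φ_m } and N an NFA over 2^{X∪Y} with L(N) = { t | t ⊨ ¬φ_b }. Then a strategy σ : (2^X)* → 2^Y is a winning strategy for the agent in the DFA game on A_{φ_m} ⊗ complement(D(N_{∃U₁,…,Uₙ})) if and only if σ solves LTLf synthesis under unreliable input for (φ_m, φ_b, X_unr). -/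
/-! ## Auxiliary lemmas -/

namespace NFA'

variable {α S : Type*} (M : NFA' α S)

lemma mem_stepSet' {s' : S} {T : Set S} {a : α} :
    s' ∈ M.stepSet T a ↔ ∃ s ∈ T, s' ∈ M.step s a := by
  simp [stepSet]

lemma mem_evalFrom' {w : List α} : ∀ {T : Set S} {s' : S},
    s' ∈ M.evalFrom T w ↔ ∃ s ∈ T, s' ∈ M.evalFrom {s} w := by
  induction w with
  | nil => intro T s'; simp [evalFrom]
  | cons a w ih =>
    intro T s'
    show s' ∈ M.evalFrom (M.stepSet T a) w ↔ _
    rw [ih]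
    constructor
    · rintro ⟨u, hu, hs'⟩
      rw [M.mem_stepSet'] at hu
      obtain ⟨s, hs, hu⟩ := hu
      refine ⟨s, hs, ?_⟩
      show s' ∈ M.evalFrom (M.stepSet {s} a) w
      rw [ih]
      refine ⟨u, ?_, hs'⟩
      rw [M.mem_stepSet']
      exact ⟨s, rfl, hu⟩
    · rintro ⟨s, hs, hs'⟩
      have h : s' ∈ M.evalFrom (M.stepSet {s} a) w := hs'
      rw [ih] at h
      obtain ⟨u, hu, h⟩ := h
      rw [M.mem_stepSet'] at hu
      obtain ⟨s'', hs'', hu⟩ := hu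
      cases hs''
      refine ⟨u, ?_, h⟩
      rw [M.mem_stepSet']
      exact ⟨s, hs, hu⟩

lemma mem_abstract_evalFrom_s9 {P S : Type*} (M : NFA' (Set P) S) (V : Set P) :
    ∀ (w : List (Set P)) (T : Set S) (s' : S),
    s' ∈ (M.abstract V).evalFrom T w ↔
      ∃ w', List.Forall₂ (fun a b => a \ V = b \ V) w w' ∧ s' ∈ M.evalFrom T w' := by
  intro w
  induction w with
  | nil =>
    intro T s'
    constructor
    · intro h; exact ⟨[], List.Forall₂.nil, h⟩
    · rintro ⟨w', hw', h⟩; cases hw'; exact h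
  | cons a w ih =>
    intro T s'
    show s' ∈ (M.abstract V).evalFrom ((M.abstract V).stepSet T a) w ↔ _
    rw [ih]
    constructor
    · rintro ⟨w', hw', h⟩
      rw [M.mem_evalFrom'] at h
      obtain ⟨u, hu, h⟩ := h
      rw [mem_stepSet'] at hu
      obtain ⟨s, hs, hu⟩ := hu
      obtain ⟨a', ha', hu⟩ := hu
      refine ⟨a' :: w', List.Forall₂.cons ha' hw', ?_⟩
      show s' ∈ M.evalFrom (M.stepSet T a') w'
      rw [M.mem_evalFrom']
      refine ⟨u, ?_, h⟩
      rw [M.mem_stepSet']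
      exact ⟨s, hs, hu⟩
    · rintro ⟨w'', hw'', h⟩
      cases hw'' with
      | cons ha' hw' =>
        rename_i a' w'
        have h' : s' ∈ M.evalFrom (M.stepSet T a') w' := h
        rw [M.mem_evalFrom'] at h'
        obtain ⟨u, hu, h'⟩ := h'
        rw [M.mem_stepSet'] at hu
        obtain ⟨s, hs, hu⟩ := hu
        refine ⟨w', hw', ?_⟩
        rw [M.mem_evalFrom']
        refine ⟨u, ?_, h'⟩
        rw [mem_stepSet']
        exact ⟨s, hs, a', ha', hu⟩

end NFA'

lemma DFA'.evalFrom_prod {α S₁ S₂ : Type*} (M₁ : DFA' α S₁) (M₂ : DFA' α S₂)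
    (w : List α) : ∀ (s₁ : S₁) (s₂ : S₂),
    (M₁.prod M₂).evalFrom (s₁, s₂) w = (M₁.evalFrom s₁ w, M₂.evalFrom s₂ w) := by
  induction w with
  | nil => intro s₁ s₂; rfl
  | cons a w ih => intro s₁ s₂; exact ih _ _

lemma DFA'.prod_accepts {α S₁ S₂ : Type*} (M₁ : DFA' α S₁) (M₂ : DFA' α S₂)
    (w : List α) : (M₁.prod M₂).Accepts w ↔ M₁.Accepts w ∧ M₂.Accepts w := by
  unfold DFA'.Accepts
  rw [show (M₁.prod M₂).start = (M₁.start, M₂.start) from rfl,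
    M₁.evalFrom_prod M₂ w]
  exact Iff.rfl

lemma DFA'.compl_accepts {α S : Type*} (M : DFA' α S) (w : List α) :
    M.compl.Accepts w ↔ ¬ M.Accepts w := Iff.rfl

lemma NFA'.det_accepts {α S : Type*} (M : NFA' α S) (w : List α) :
    M.det.Accepts w ↔ M.Accepts w := Iff.rfl

lemma EquivUpTo.symm' {P : Type*} {V : Set P} {t t' : List (Set P)}
    (h : EquivUpTo V t t') : EquivUpTo V t' t := by
  induction h with
  | nil => exact List.Forall₂.nil
  | cons h₁ _ ih => exact List.Forall₂.cons h₁.symm ih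

/-- Let `φm`, `φb` be LTLf formulas over `X ⊎ Y` with unreliable input
variables `Xunr = {U₁, …, Uₙ} ⊆ X`. Let `Am` be a DFA with `L(Am) = { t | t ⊨ φm }` and
`N` an NFA with `L(N) = { t | t ⊨ ¬φb }`. Then a strategy `σ` is winning for the agent in
the DFA game on `Am ⊗ complement(D(N_{∃U₁,…,Uₙ}))` iff `σ` solves LTLf synthesis under
unreliable input for `(φm, φb, Xunr)`. -/
theorem direct_technique_correct {X Y S₁ S₂ : Type*}
    (φm φb : LTLf (X ⊕ Y)) (Us : List X)
    (Am : DFA' (Set (X ⊕ Y)) S₁)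
    (hAm : ∀ t : List (Set (X ⊕ Y)), t ≠ [] → (Am.Accepts t ↔ LTLf.Sat t φm 0))
    (N : NFA' (Set (X ⊕ Y)) S₂)
    (hN : ∀ t : List (Set (X ⊕ Y)), t ≠ [] → (N.Accepts t ↔ LTLf.Sat t (.not φb) 0))
    (σ : List (Set X) → Set Y) :
    Winning (Am.prod ((N.abstract (Sum.inl '' {x | x ∈ Us})).det.compl)) σ ↔
      SolvesUnreliable σ φm φb {x | x ∈ Us} := by
  have key : ∀ t : List (Set (X ⊕ Y)), t ≠ [] →
      ((Am.prod ((N.abstract (Sum.inl '' {x | x ∈ Us})).det.compl)).Accepts t ↔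
        (LTLf.Sat t φm 0 ∧
          ∀ t', EquivUpTo (Sum.inl '' {x | x ∈ Us}) t' t → LTLf.Sat t' φb 0)) := by
    intro t ht
    rw [DFA'.prod_accepts, DFA'.compl_accepts, NFA'.det_accepts, hAm t ht]
    constructor
    · rintro ⟨h1, h2⟩
      refine ⟨h1, fun t' ht' => ?_⟩
      by_contra hb
      apply h2
      have ht'ne : t' ≠ [] := by
        intro h; subst h
        exact ht (List.length_eq_zero_iff.mp (ht'.length_eq.symm.trans rfl))
      have hacc : N.Accepts t' := (hN t' ht'ne).mpr hb
      obtain ⟨s, hs, hsa⟩ := hacc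
      refine ⟨s, ?_, hsa⟩
      rw [NFA'.mem_abstract_evalFrom_s9]
      exact ⟨t', ht'.symm', hs⟩
    · rintro ⟨h1, h2⟩
      refine ⟨h1, ?_⟩
      rintro ⟨s, hs, hsa⟩
      rw [NFA'.mem_abstract_evalFrom_s9] at hs
      obtain ⟨t', ht', hs⟩ := hs
      have hacc : N.Accepts t' := ⟨s, hs, hsa⟩
      have heq : EquivUpTo (Sum.inl '' {x | x ∈ Us}) t' t :=
        EquivUpTo.symm' ht'
      have ht'ne : t' ≠ [] := by
        intro h; subst h
        exact ht (List.length_eq_zero_iff.mp heq.length_eq.symm)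
      exact ((hN t' ht'ne).mp hacc) (h2 t' heq)
  have hne : ∀ (env : ℕ → Set X) (k : ℕ), playTrace σ env k ≠ [] := by
    intro env k h
    have := congrArg List.length h
    simp [playTrace] at this
  constructor
  · intro hw env
    obtain ⟨k, hk⟩ := hw env
    exact ⟨k, (key _ (hne env k)).mp hk⟩
  · intro hs env
    obtain ⟨k, hk⟩ := hs env
    exact ⟨k, (key _ (hne env k)).mpr hk⟩
end

section
/- Let φ_m and φ_b be LTLf formulas over X ⊎ Y and X_unr = {U₁, …, Uₙ} ⊆ X. A strategy σ : (2^X)* → 2^Y solves LTLf synthesis under unreliable input for (φ_m, φ_b, X_unr) if and only if σ realizes QLTLf synthesis for the QLTLf formula φ_m ∧ ∀U₁. … ∀Uₙ. φ_b. -/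
section Aux

variable {P : Type*}

lemma toQ_sat (φ : LTLf P) : ∀ (t : List (Set P)) (i : ℕ),
    QLTLf.Sat t φ.toQ i ↔ LTLf.Sat t φ i := by
  induction φ with
  | atom a => intro t i; rfl
  | not φ ih => intro t i; simp [LTLf.toQ, QLTLf.Sat, LTLf.Sat, ih]
  | and φ ψ ih₁ ih₂ => intro t i; simp [LTLf.toQ, QLTLf.Sat, LTLf.Sat, ih₁, ih₂]
  | next φ ih => intro t i; simp [LTLf.toQ, QLTLf.Sat, LTLf.Sat, ih]
  | until_ φ ψ ih₁ ih₂ =>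
      intro t i; simp only [LTLf.toQ, QLTLf.Sat, LTLf.Sat]
      constructor
      · rintro ⟨j, h1, h2, h3, h4⟩
        exact ⟨j, h1, h2, (ih₂ t j).1 h3, fun k hk hk' => (ih₁ t k).1 (h4 k hk hk')⟩
      · rintro ⟨j, h1, h2, h3, h4⟩
        exact ⟨j, h1, h2, (ih₂ t j).2 h3, fun k hk hk' => (ih₁ t k).2 (h4 k hk hk')⟩

lemma sat_all {t : List (Set P)} {p : P} {ψ : QLTLf P} {i : ℕ} :
    QLTLf.Sat t (QLTLf.all p ψ) i ↔
      ∀ t', EquivUpTo {p} t' t → QLTLf.Sat t' ψ i := by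
  simp only [QLTLf.all, QLTLf.Sat]
  push_neg
  rfl

lemma equiv_compose {a : P} {V : Set P} {t t₁ t₂ : List (Set P)}
    (h₁ : EquivUpTo {a} t₁ t) (h₂ : EquivUpTo V t₂ t₁) :
    EquivUpTo (insert a V) t₂ t := by
  unfold EquivUpTo at *
  induction t generalizing t₁ t₂ with
  | nil => cases h₁; cases h₂; exact List.Forall₂.nil
  | cons b bs ih =>
      cases h₁ with
      | cons hd tl =>
          cases h₂ with
          | cons hd₂ tl₂ =>
              refine List.Forall₂.cons ?_ (ih tl tl₂)
              ext x
              have e1 := Set.ext_iff.1 hd x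
              have e2 := Set.ext_iff.1 hd₂ x
              simp only [Set.mem_diff, Set.mem_singleton_iff, Set.mem_insert_iff] at *
              tauto

lemma equiv_decompose {a : P} {V : Set P} {t t' : List (Set P)}
    (h : EquivUpTo (insert a V) t' t) :
    ∃ t₁, EquivUpTo {a} t₁ t ∧ EquivUpTo V t' t₁ := by
  unfold EquivUpTo at *
  induction t' generalizing t with
  | nil => cases h; exact ⟨[], List.Forall₂.nil, List.Forall₂.nil⟩
  | cons c cs ih =>
      cases h with
      | @cons _ b _ bs hd tl =>
          obtain ⟨t₁, h1, h2⟩ := ih tl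
          refine ⟨((b \ {a}) ∪ ({a} ∩ c)) :: t₁,
            List.Forall₂.cons ?_ h1, List.Forall₂.cons ?_ h2⟩
          · ext x
            simp only [Set.mem_diff, Set.mem_singleton_iff, Set.mem_union,
              Set.mem_inter_iff]
            tauto
          · ext x
            have e := Set.ext_iff.1 hd x
            simp only [Set.mem_diff, Set.mem_singleton_iff, Set.mem_insert_iff,
              Set.mem_union, Set.mem_inter_iff] at *
            by_cases hx : x = a <;> tauto

lemma fold_sat {X Y : Type*} (φb : LTLf (X ⊕ Y)) :
    ∀ (Us : List X) (t : List (Set (X ⊕ Y))) (i : ℕ),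
      QLTLf.Sat t (Us.foldr (fun u acc => QLTLf.all (Sum.inl u) acc) φb.toQ) i ↔
        ∀ t', EquivUpTo (Sum.inl '' {x | x ∈ Us}) t' t → LTLf.Sat t' φb i := by
  intro Us
  induction Us with
  | nil =>
      intro t i
      simp only [List.foldr_nil]
      rw [toQ_sat]
      constructor
      · intro h t' ht'
        have : t' = t := by
          simp only [EquivUpTo, List.not_mem_nil, Set.setOf_false, Set.image_empty,
            Set.diff_empty] at ht'
          exact List.forall₂_eq_eq_eq ▸ ht'
        rwa [this]
      · intro h
        apply h t
        simp only [EquivUpTo, List.not_mem_nil, Set.setOf_false, Set.image_empty,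
          Set.diff_empty]
        exact List.forall₂_same.mpr fun _ _ => rfl
  | cons u rest ih =>
      intro t i
      have hset : (Sum.inl '' {x | x ∈ u :: rest} : Set (X ⊕ Y)) =
          insert (Sum.inl u) (Sum.inl '' {x | x ∈ rest}) := by
        rw [show {x | x ∈ u :: rest} = insert u {x | x ∈ rest} by
          ext x; simp [List.mem_cons]]
        exact Set.image_insert_eq
      simp only [List.foldr_cons, sat_all, hset]
      constructor
      · intro h t' ht'
        obtain ⟨t₁, h1, h2⟩ := equiv_decompose ht'
        exact (ih t₁ i).1 (h t₁ h1) t' h2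
      · intro h t₁ h1
        exact (ih t₁ i).2 fun t' h2 => h t' (equiv_compose h1 h2)

end Aux

/-- Let `φm`, `φb` be LTLf formulas over `X ⊎ Y` and
`Xunr = {U₁, …, Uₙ} ⊆ X`. A strategy `σ` solves LTLf synthesis under unreliable input for
`(φm, φb, Xunr)` iff `σ` realizes QLTLf synthesis for the QLTLf formula
`φm ∧ ∀U₁. … ∀Uₙ. φb`. -/
theorem unreliable_iff_qltlf {X Y : Type*}
    (φm φb : LTLf (X ⊕ Y)) (Us : List X)
    (σ : List (Set X) → Set Y) :
    SolvesUnreliable σ φm φb {x | x ∈ Us} ↔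
      RealizesQ σ (QLTLf.and φm.toQ
        (Us.foldr (fun u acc => QLTLf.all (Sum.inl u) acc) φb.toQ)) := by
  unfold SolvesUnreliable RealizesQ
  apply forall_congr'
  intro env
  apply exists_congr
  intro k
  simp only [QLTLf.Sat, toQ_sat, fold_sat]
end

section
/- For every QLTLf formula φ, every finite trace t of length n, and every position i with 1 ≤ i ≤ n: t, i ⊨ φ if and only if the MSO translation is satisfied under the trace-induced assignment, i.e., [x/i], w_t ⊨ mso(φ, x), where w_t(A) = { j | A ∈ t(j) } for each propositional variable A. -/
/-! ## Monadic second-order logic over finite words -/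

/-- MSO formulas over finite words: second-order variables are the propositional
variables in `P`, first-order variables are represented by de Bruijn indices. -/
inductive MSO (P : Type*) where
  | mem : P → ℕ → MSO P          -- `X(x)`
  | lt : ℕ → ℕ → MSO P           -- `x < y`
  | and : MSO P → MSO P → MSO P
  | not : MSO P → MSO P
  | exFO : MSO P → MSO P         -- `∃x. φ` (binds de Bruijn index `0`)
  | exSO : P → MSO P → MSO P     -- `∃X. φ`

/-- Extend a first-order assignment with a value for the newly bound variable
(de Bruijn index `0`). -/
def consEnv {n : ℕ} (d : Fin n) (u : ℕ → Fin n) : ℕ → Fin n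
  | 0 => d
  | k + 1 => u k

/-- Tarskian satisfaction of an MSO formula over the domain `{1, …, n}` (modelled as
`Fin n`), under the second-order assignment `w` and first-order assignment `u`;
first-order quantifiers range over positions, second-order quantifiers over sets of
positions. -/
def MSO.Sat {P : Type*} [DecidableEq P] (n : ℕ) :
    MSO P → (P → Set (Fin n)) → (ℕ → Fin n) → Prop
  | .mem X x, w, u => u x ∈ w X
  | .lt x y, _, u => u x < u y
  | .and φ ψ, w, u => MSO.Sat n φ w u ∧ MSO.Sat n ψ w u
  | .not φ, w, u => ¬ MSO.Sat n φ w u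
  | .exFO φ, w, u => ∃ d : Fin n, MSO.Sat n φ w (consEnv d u)
  | .exSO X φ, w, u => ∃ D : Set (Fin n), MSO.Sat n φ (Function.update w X D) u

namespace MSO

variable {P : Type*}

/-- `x ≤ y`, definable from `<`. -/
def le (x y : ℕ) : MSO P := .not (.lt y x)

/-- Implication, definable from `∧` and `¬`. -/
def impl (φ ψ : MSO P) : MSO P := .not (.and φ (.not ψ))

/-- First-order universal quantification `∀x. φ := ¬∃x. ¬φ`. -/
def allFO (φ : MSO P) : MSO P := .not (.exFO (.not φ))

/-- `succ(x, y)`: `y` is the successor position of `x`, definable from `<`. -/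
def succ (x y : ℕ) : MSO P :=
  .and (.lt x y) (.not (.exFO (.and (.lt (x + 1) 0) (.lt 0 (y + 1)))))

/-- `y = last`: `y` is the last position, definable from `<`. -/
def isLast (y : ℕ) : MSO P := .not (.exFO (.lt (y + 1) 0))

/-- `y ≤ last`, definable from `<`. -/
def leLast (y : ℕ) : MSO P := .exFO (.and (isLast 0) (le (y + 1) 0))

end MSO

/-- The translation `mso(φ, x)` from QLTLf to MSO. -/
def QLTLf.toMSO {P : Type*} : QLTLf P → ℕ → MSO P
  | .atom A, x => .mem A x
  | .not φ, x => .not (φ.toMSO x)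
  | .and φ ψ, x => .and (φ.toMSO x) (ψ.toMSO x)
  | .next φ, x => .exFO (.and (MSO.succ (x + 1) 0) (φ.toMSO 0))
  | .until_ φ ψ, x =>
      .exFO (.and (.and (MSO.le (x + 1) 0) (MSO.leLast 0))
        (.and (ψ.toMSO 0)
          (MSO.allFO (MSO.impl (.and (MSO.le (x + 2) 0) (.lt 0 1)) (φ.toMSO 0)))))
  | .ex X φ, x => .exSO X (φ.toMSO x)
-- transport lemma
-- transport lemma
private theorem mso_sat_cast {P : Type*} [DecidableEq P] {n m : ℕ} (h : n = m) (φ : MSO P)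
    (w : P → Set (Fin n)) (w' : P → Set (Fin m)) (u : ℕ → Fin n) (u' : ℕ → Fin m)
    (hw : ∀ A (j : Fin n), j ∈ w A ↔ Fin.cast h j ∈ w' A)
    (hu : ∀ k, (u k).val = (u' k).val) :
    MSO.Sat n φ w u ↔ MSO.Sat m φ w' u' := by
  subst h
  have hu2 : u = u' := funext fun k => Fin.ext (hu k)
  have hw2 : w = w' := funext fun A => Set.ext fun j => hw A j
  rw [hu2, hw2]

private theorem qltlf_mso_aux {P : Type*} [DecidableEq P] (φ : QLTLf P) :
    ∀ (t : List (Set P)) (i : ℕ) (hi : i < t.length) (x : ℕ) (u : ℕ → Fin t.length),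
      u x = ⟨i, hi⟩ →
      (QLTLf.Sat t φ i ↔
        MSO.Sat t.length (φ.toMSO x) (fun A => {j : Fin t.length | A ∈ t.get j}) u) := by
  induction φ with
  | atom A =>
    intro t i hi x u hx
    simp only [QLTLf.Sat, QLTLf.toMSO, MSO.Sat, hx]
    exact ⟨fun ⟨h, ha⟩ => ha, fun h => ⟨hi, h⟩⟩
  | not φ ih =>
    intro t i hi x u hx
    simp only [QLTLf.Sat, QLTLf.toMSO, MSO.Sat]
    rw [ih t i hi x u hx]
  | and φ ψ ihφ ihψ =>
    intro t i hi x u hx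
    simp only [QLTLf.Sat, QLTLf.toMSO, MSO.Sat]
    rw [ihφ t i hi x u hx, ihψ t i hi x u hx]
  | next φ ih =>
    intro t i hi x u hx
    simp only [QLTLf.Sat, QLTLf.toMSO, MSO.Sat, MSO.succ, consEnv, not_exists,
      not_and, Fin.lt_def]
    constructor
    · rintro ⟨h1, h2⟩
      refine ⟨⟨i + 1, h1⟩, ⟨?_, ?_⟩, (ih t (i+1) h1 0 _ rfl).mp h2⟩
      · rw [hx]; show i < i + 1; omega
      · intro e he
        rw [hx] at he
        replace he : i < e.val := he
        show ¬ e.val < i + 1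
        omega
    · rintro ⟨d, ⟨hd1, hd2⟩, hd3⟩
      rw [hx] at hd1 hd2
      replace hd1 : i < d.val := hd1
      have hdv : d.val = i + 1 := by
        by_contra hne
        have h2 : i + 1 < d.val := by omega
        have := hd2 ⟨i + 1, lt_trans h2 d.isLt⟩ (by show i < i + 1; omega)
        exact this h2
      have h1 : i + 1 < t.length := hdv ▸ d.isLt
      exact ⟨h1, (ih t (i+1) h1 0 (consEnv d u) (Fin.ext hdv)).mpr hd3⟩
  | until_ φ ψ ihφ ihψ =>
    intro t i hi x u hx
    simp only [QLTLf.Sat, QLTLf.toMSO, MSO.Sat, MSO.le, MSO.leLast, MSO.isLast,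
      MSO.allFO, MSO.impl, consEnv, not_exists, not_and, not_not, Fin.lt_def]
    constructor
    · rintro ⟨j, hij, hjl, hψ, hφ⟩
      refine ⟨⟨j, hjl⟩, ⟨?_, ?_⟩, (ihψ t j hjl 0 _ rfl).mp hψ, ?_⟩
      · rw [hx]; show ¬ j < i; omega
      · refine ⟨⟨t.length - 1, by omega⟩, fun f => ?_, ?_⟩
        · show ¬ t.length - 1 < f.val
          have := f.isLt; omega
        · show ¬ t.length - 1 < j; omega
      · rintro e ⟨he1, he2⟩
        rw [hx] at he1
        replace he1 : ¬ e.val < i := he1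
        replace he2 : e.val < j := he2
        exact (ihφ t e.val e.isLt 0 _ rfl).mp (hφ e.val (by omega) he2)
    · rintro ⟨d, ⟨h1, _⟩, hψ, hφ⟩
      rw [hx] at h1
      replace h1 : ¬ d.val < i := h1
      refine ⟨d.val, by omega, d.isLt, (ihψ t d.val d.isLt 0 _ rfl).mpr hψ, ?_⟩
      intro k hk1 hk2
      have hkl : k < t.length := lt_trans hk2 d.isLt
      exact (ihφ t k hkl 0 _ rfl).mpr
        (hφ ⟨k, hkl⟩ ⟨by rw [hx]; show ¬ k < i; omega, hk2⟩)
  | ex p φ ih =>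
    intro t i hi x u hx
    simp only [QLTLf.Sat, QLTLf.toMSO, MSO.Sat]
    constructor
    · rintro ⟨t', heq, hsat⟩
      have hlen : t'.length = t.length := heq.length_eq
      have hpt : ∀ (j : ℕ) (h1 : j < t'.length) (h2 : j < t.length),
          t'.get ⟨j, h1⟩ \ {p} = t.get ⟨j, h2⟩ \ {p} :=
        (List.forall₂_iff_get.mp heq).2
      refine ⟨{j : Fin t.length | p ∈ t'.get (Fin.cast hlen.symm j)}, ?_⟩
      have hi' : i < t'.length := hlen ▸ hi
      have hiff := ih t' i hi' x (fun k => Fin.cast hlen.symm (u k))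
        (by apply Fin.ext; simp [hx])
      refine (mso_sat_cast hlen _ _ _ _ _ ?_ (fun k => by simp)).mp (hiff.mp hsat)
      intro A j
      rcases eq_or_ne A p with rfl | hne
      · simp only [Function.update_self, Set.mem_setOf_eq]
        have hc : Fin.cast hlen.symm (Fin.cast hlen j) = j := by apply Fin.ext; simp
        rw [hc]
      · simp only [Function.update_of_ne hne, Set.mem_setOf_eq]
        have hd := hpt j.val j.isLt (hlen ▸ j.isLt)
        constructor
        · intro hA
          have h2 : A ∈ t'.get ⟨j.val, j.isLt⟩ \ {p} := ⟨hA, hne⟩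
          rw [hd] at h2
          exact h2.1
        · intro hA
          have h2 : A ∈ t.get ⟨j.val, hlen ▸ j.isLt⟩ \ {p} := ⟨hA, hne⟩
          rw [← hd] at h2
          exact h2.1
    · rintro ⟨D, hsat⟩
      set t' : List (Set P) := List.ofFn (fun j : Fin t.length =>
        {q | (q ∈ t.get j ∧ q ≠ p) ∨ (q = p ∧ j ∈ D)}) with ht'
      have hlen : t'.length = t.length := List.length_ofFn
      have hget : ∀ (j : Fin t'.length),
          t'.get j = {q | (q ∈ t.get (Fin.cast hlen j) ∧ q ≠ p) ∨
            (q = p ∧ Fin.cast hlen j ∈ D)} := by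
        intro j
        exact List.get_ofFn _ j
      refine ⟨t', ?_, ?_⟩
      · rw [EquivUpTo, List.forall₂_iff_get]
        refine ⟨hlen, fun j h1 h2 => ?_⟩
        rw [hget ⟨j, h1⟩]
        have hc : (Fin.cast hlen ⟨j, h1⟩ : Fin t.length) = ⟨j, h2⟩ := by
          apply Fin.ext; simp
        rw [hc]
        ext q
        simp only [Set.mem_diff, Set.mem_setOf_eq, Set.mem_singleton_iff]
        constructor
        · rintro ⟨(⟨hq, hne⟩ | ⟨rfl, _⟩), hq2⟩
          · exact ⟨hq, hq2⟩
          · exact absurd rfl hq2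
        · rintro ⟨hq, hne⟩
          exact ⟨Or.inl ⟨hq, hne⟩, hne⟩
      · have hi' : i < t'.length := hlen ▸ hi
        rw [ih t' i hi' x (fun k => Fin.cast hlen.symm (u k)) (by apply Fin.ext; simp [hx])]
        refine (mso_sat_cast hlen _ _ _ _ _ ?_ (fun k => by simp)).mpr hsat
        intro A j
        simp only [Set.mem_setOf_eq]
        rw [hget j]
        rcases eq_or_ne A p with rfl | hne
        · simp only [Function.update_self, Set.mem_setOf_eq]
          tauto
        · simp only [Function.update_of_ne hne, Set.mem_setOf_eq]
          tauto


/-- For every QLTLf formula `φ`, every finite trace `t`, and every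
position `i` of `t`: `t, i ⊨ φ` iff the MSO translation `mso(φ, x)` is satisfied under
the trace-induced second-order assignment `w_t(A) = { j | A ∈ t(j) }` and any first-order
assignment sending `x` to `i`. -/
theorem qltlf_mso_translation_correct {P : Type*} [DecidableEq P]
    (φ : QLTLf P) (t : List (Set P)) (ht : t ≠ [])
    (i : ℕ) (hi : i < t.length) (x : ℕ) (u : ℕ → Fin t.length)
    (hx : u x = ⟨i, hi⟩) :
    QLTLf.Sat t φ i ↔
      MSO.Sat t.length (φ.toMSO x)
        (fun A => {j : Fin t.length | A ∈ t.get j}) u := by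
  exact qltlf_mso_aux φ t i hi x u hx
end

section
/- Let ψ be a QLTLf formula over P, let X₁, …, Xₙ ∈ P, and let A be an NFA over 2^P with L(A) = { t | t ⊨ ψ }. Then the determinization of the existential abstraction, D(A_{∃X₁,…,Xₙ}), recognizes exactly the models of the existentially quantified formula: L(D(A_{∃X₁,…,Xₙ})) = { t | t ⊨ ∃X₁. … ∃Xₙ. ψ }. -/
section Aux

variable {P S α : Type*}

theorem mem_evalFrom_iff (M : NFA' α S) (t : List α) :
    ∀ (T : Set S) (s' : S), s' ∈ M.evalFrom T t ↔ ∃ s ∈ T, s' ∈ M.evalFrom {s} t := by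
  induction t with
  | nil => simp [NFA'.evalFrom]
  | cons a t ih =>
    intro T s'
    have hstep : ∀ (T' : Set S), M.evalFrom T' (a :: t) = M.evalFrom (M.stepSet T' a) t :=
      fun _ => rfl
    rw [hstep, ih]
    constructor
    · rintro ⟨s₁, hs₁, h⟩
      rcases Set.mem_iUnion₂.mp hs₁ with ⟨s, hs, hst⟩
      refine ⟨s, hs, ?_⟩
      rw [hstep, ih]
      exact ⟨s₁, by simpa [NFA'.stepSet] using hst, h⟩
    · rintro ⟨s, hs, h⟩
      rw [hstep, ih] at h
      rcases h with ⟨s₁, hs₁, h₁⟩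
      exact ⟨s₁, Set.mem_iUnion₂.mpr ⟨s, hs, by simpa [NFA'.stepSet] using hs₁⟩, h₁⟩

theorem abstract_evalFrom (A : NFA' (Set P) S) (V : Set P) (t : List (Set P)) :
    ∀ (s s' : S), s' ∈ (A.abstract V).evalFrom {s} t ↔
      ∃ t', EquivUpTo V t' t ∧ s' ∈ A.evalFrom {s} t' := by
  induction t with
  | nil =>
    intro s s'
    constructor
    · intro h; exact ⟨[], List.Forall₂.nil, h⟩
    · rintro ⟨t', ht', h⟩
      cases ht'
      exact h
  | cons a t ih =>
    intro s s'
    have h1 : (A.abstract V).evalFrom {s} (a :: t)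
        = (A.abstract V).evalFrom ((A.abstract V).stepSet {s} a) t := rfl
    rw [h1, mem_evalFrom_iff]
    constructor
    · rintro ⟨s₁, hs₁, h⟩
      have hs₁' : s₁ ∈ (A.abstract V).step s a := by
        simpa [NFA'.stepSet] using hs₁
      rcases hs₁' with ⟨a', ha', hstep⟩
      rcases (ih s₁ s').mp h with ⟨t', ht', h'⟩
      refine ⟨a' :: t', List.Forall₂.cons ha'.symm ht', ?_⟩
      have h2 : A.evalFrom {s} (a' :: t') = A.evalFrom (A.stepSet {s} a') t' := rfl
      rw [h2, mem_evalFrom_iff]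
      exact ⟨s₁, by simpa [NFA'.stepSet] using hstep, h'⟩
    · rintro ⟨t', ht', h⟩
      cases ht' with
      | cons ha' htl =>
        rename_i a' t''
        have h2 : A.evalFrom {s} (a' :: t'') = A.evalFrom (A.stepSet {s} a') t'' := rfl
        rw [h2, mem_evalFrom_iff] at h
        rcases h with ⟨s₁, hs₁, h₁⟩
        refine ⟨s₁, ?_, (ih s₁ s').mpr ⟨t'', htl, h₁⟩⟩
        have : s₁ ∈ (A.abstract V).step s a :=
          ⟨a', ha'.symm, by simpa [NFA'.stepSet] using hs₁⟩
        simpa [NFA'.stepSet] using this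

theorem split_diff (u : P) (V : Set P) (a c : Set P)
    (h : a \ ({u} ∪ V) = c \ ({u} ∪ V)) :
    ∃ b : Set P, b \ {u} = c \ {u} ∧ a \ V = b \ V := by
  refine ⟨(c \ {u}) ∪ (a ∩ {u}), ?_, ?_⟩ <;> ext x <;>
  · have hx := Set.ext_iff.mp h x
    simp only [Set.mem_diff, Set.mem_union, Set.mem_singleton_iff, Set.mem_inter_iff] at hx ⊢
    tauto

theorem comp_diff (u : P) (V : Set P) (a b c : Set P)
    (h1 : a \ V = b \ V) (h2 : b \ {u} = c \ {u}) :
    a \ ({u} ∪ V) = c \ ({u} ∪ V) := by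
  ext x
  have hx1 := Set.ext_iff.mp h1 x
  have hx2 := Set.ext_iff.mp h2 x
  simp only [Set.mem_diff, Set.mem_union, Set.mem_singleton_iff] at hx1 hx2 ⊢
  tauto

theorem equiv_split (u : P) (V : Set P) :
    ∀ {t' t : List (Set P)}, EquivUpTo ({u} ∪ V) t' t →
      ∃ t₁, EquivUpTo {u} t₁ t ∧ EquivUpTo V t' t₁ := by
  intro t' t h
  induction h with
  | nil => exact ⟨[], List.Forall₂.nil, List.Forall₂.nil⟩
  | cons ha hl ih =>
    rcases ih with ⟨t₁, h1, h2⟩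
    rcases split_diff u V _ _ ha with ⟨b, hb1, hb2⟩
    exact ⟨b :: t₁, List.Forall₂.cons hb1 h1, List.Forall₂.cons hb2 h2⟩

theorem equiv_comp (u : P) (V : Set P) :
    ∀ {t' t₁ t : List (Set P)}, EquivUpTo V t' t₁ → EquivUpTo {u} t₁ t →
      EquivUpTo ({u} ∪ V) t' t := by
  intro t' t₁ t h1
  induction h1 generalizing t with
  | nil => intro h2; cases h2; exact List.Forall₂.nil
  | cons ha hl ih =>
    intro h2
    cases h2 with
    | cons hb hl2 => exact List.Forall₂.cons (comp_diff u V _ _ _ ha hb) (ih hl2)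

theorem sat_foldr (ψ : QLTLf P) :
    ∀ (Us : List P) (t : List (Set P)) (i : ℕ),
      QLTLf.Sat t (Us.foldr QLTLf.ex ψ) i ↔
        ∃ t', EquivUpTo {x | x ∈ Us} t' t ∧ QLTLf.Sat t' ψ i := by
  intro Us
  induction Us with
  | nil =>
    intro t i
    constructor
    · intro h
      refine ⟨t, ?_, h⟩
      simp only [EquivUpTo, List.not_mem_nil, Set.setOf_false, Set.diff_empty]
      exact List.forall₂_same.mpr (fun _ _ => rfl)
    · rintro ⟨t', ht', h⟩
      simp only [EquivUpTo, List.not_mem_nil, Set.setOf_false, Set.diff_empty] at ht'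
      have heq : t' = t := by
        clear h
        induction ht' with
        | nil => rfl
        | cons hab _ ih2 => rw [hab, ih2]
      rwa [heq] at h
  | cons u Us ih =>
    intro t i
    have hset : {x | x ∈ u :: Us} = {u} ∪ {x | x ∈ Us} := by
      ext x; simp [or_comm]
    rw [hset]
    constructor
    · rintro ⟨t₁, ht₁, h⟩
      rcases (ih t₁ i).mp h with ⟨t', ht', h'⟩
      exact ⟨t', equiv_comp u _ ht' ht₁, h'⟩
    · rintro ⟨t', ht', h⟩
      rcases equiv_split u _ ht' with ⟨t₁, h1, h2⟩
      exact ⟨t₁, h1, (ih t₁ i).mpr ⟨t', h2, h⟩⟩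

end Aux

/-- Let `ψ` be a QLTLf formula over `P`, `X₁, …, Xₙ ∈ P`, and `A` an
NFA over `2^P` with `L(A) = { t | t ⊨ ψ }`. Then `D(A_{∃X₁,…,Xₙ})` recognizes exactly the
models of `∃X₁. … ∃Xₙ. ψ`. -/
theorem det_abstract_recognizes_exists {P S : Type*}
    (ψ : QLTLf P) (Us : List P) (A : NFA' (Set P) S)
    (hA : ∀ t : List (Set P), t ≠ [] → (A.Accepts t ↔ QLTLf.Sat t ψ 0)) :
    ∀ t : List (Set P), t ≠ [] →
      ((A.abstract {x | x ∈ Us}).det.Accepts t ↔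
        QLTLf.Sat t (Us.foldr QLTLf.ex ψ) 0) := by
  intro t ht
  have hdet : (A.abstract {x | x ∈ Us}).det.Accepts t ↔ (A.abstract {x | x ∈ Us}).Accepts t :=
    Iff.rfl
  rw [hdet, sat_foldr]
  constructor
  · rintro ⟨s', hs', hacc⟩
    rcases (abstract_evalFrom A _ t A.start s').mp hs' with ⟨t', ht', h'⟩
    have hne : t' ≠ [] := by
      have := List.Forall₂.length_eq ht'
      intro hE; rw [hE] at this; exact ht (List.eq_nil_of_length_eq_zero this.symm)
    exact ⟨t', ht', (hA t' hne).mp ⟨s', h', hacc⟩⟩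
  · rintro ⟨t', ht', hsat⟩
    have hne : t' ≠ [] := by
      have := List.Forall₂.length_eq ht'
      intro hE; rw [hE] at this; exact ht (List.eq_nil_of_length_eq_zero this.symm)
    rcases (hA t' hne).mpr hsat with ⟨s', h', hacc⟩
    exact ⟨s', (abstract_evalFrom A _ t A.start s').mpr ⟨t', ht', h'⟩, hacc⟩
end
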